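/- If the Gram matrix W = ∫_{t₀}^{t₁} e^{A(t₁−τ)} B Bᵀ (e^{A(t₁−τ)})ᵀ dτ of the continuous-time positive system is monomial, then the system x' = Ax + Bu is positively reachable on [t₀,t₁]. -/

import Mathlib

open scoped Matrix Classical
open MeasureTheory

attribute [local instance] Matrix.linftyOpNormedRing Matrix.linftyOpNormedAlgebra

/-- A nonnegative square matrix is monomial: each row and each column contains
exactly one strictly positive entry, all other entries being zero. -/
def IsMonomial {n : ℕ} (A : Matrix (Fin n) (Fin n) ℝ) : Prop :=
  (∀ i j, 0 ≤ A i j) ∧ (∀ i, ∃! j, 0 < A i j) ∧ (∀ j, ∃! i, 0 < A i j)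

theorem gram_monomial_implies_positive_reachability (n m : ℕ)
    (A : Matrix (Fin n) (Fin n) ℝ) (B : Matrix (Fin n) (Fin m) ℝ)
    (hA : ∀ t : ℝ, 0 ≤ t → ∀ i j, 0 ≤ NormedSpace.exp (t • A) i j)
    (hB : ∀ i j, 0 ≤ B i j)
    (t₀ t₁ : ℝ) (ht : t₀ < t₁)
    (W : Matrix (Fin n) (Fin n) ℝ)
    (hW : ∀ i j, W i j = ∫ τ in t₀..t₁,
      (NormedSpace.exp ((t₁ - τ) • A) * B * Bᵀ *
        (NormedSpace.exp ((t₁ - τ) • A))ᵀ) i j)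
    (hWmono : IsMonomial W) :
    ∀ xbar : Fin n → ℝ, (∀ i, 0 ≤ xbar i) →
      ∃ u : ℝ → Fin m → ℝ, (∀ τ j, 0 ≤ u τ j) ∧
        IntervalIntegrable
          (fun τ => (NormedSpace.exp ((t₁ - τ) • A)).mulVec (B.mulVec (u τ)))
          volume t₀ t₁ ∧
        (∫ τ in t₀..t₁, (NormedSpace.exp ((t₁ - τ) • A)).mulVec (B.mulVec (u τ))) = xbar := by
  intro xbar hxbar
  obtain ⟨hWnn, hrow, hcol⟩ := hWmono
  set E : ℝ → Matrix (Fin n) (Fin n) ℝ := fun τ => NormedSpace.exp ((t₁ - τ) • A) with hE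
  set M : ℝ → Matrix (Fin n) (Fin n) ℝ := fun τ => E τ * B * Bᵀ * (E τ)ᵀ with hM
  -- choose for each column j the unique row with a positive entry
  choose r hr hr' using hcol
  set c : Fin n → ℝ := fun j => xbar (r j) / W (r j) j with hc
  have hcnn : ∀ j, 0 ≤ c j := fun j => div_nonneg (hxbar _) (le_of_lt (hr j))
  have hWc : ∀ k, ∑ j, W k j * c j = xbar k := by
    intro k
    obtain ⟨j₀, hj₀, hj₀u⟩ := hrow k
    rw [Finset.sum_eq_single j₀]
    · have hk : k = r j₀ := hr' j₀ k hj₀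
      rw [hc]
      simp only [← hk]
      rw [mul_comm, div_mul_cancel₀ _ (ne_of_gt hj₀)]
    · intro j _ hj
      have : W k j = 0 := by
        rcases lt_or_eq_of_le (hWnn k j) with h | h
        · exact absurd (hj₀u j h) hj
        · exact h.symm
      rw [this, zero_mul]
    · intro h; exact absurd (Finset.mem_univ j₀) h
  -- continuity facts
  have hEc : Continuous E := by
    have h1 : Continuous fun τ : ℝ => (t₁ - τ) • A :=
      (continuous_const.sub continuous_id).smul continuous_const
    exact NormedSpace.exp_continuous.comp h1
  have htr : Continuous (fun N : Matrix (Fin n) (Fin n) ℝ => Nᵀ) :=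
    LinearMap.continuous_of_finiteDimensional
      ((Matrix.transposeLinearEquiv (Fin n) (Fin n) ℝ ℝ).toLinearMap)
  have hMc : Continuous M := by
    have hL : Continuous (fun X : Matrix (Fin n) (Fin n) ℝ => X * B * Bᵀ) :=
      LinearMap.continuous_of_finiteDimensional
        (({ toFun := fun X => X * B * Bᵀ
            map_add' := by intro X Y; simp [Matrix.add_mul]
            map_smul' := by
              intro a X
              show a • X * B * Bᵀ = a • (X * B * Bᵀ)
              rw [Matrix.smul_mul, Matrix.smul_mul] } :
          Matrix (Fin n) (Fin n) ℝ →ₗ[ℝ] Matrix (Fin n) (Fin n) ℝ))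
    exact Continuous.mul (hL.comp hEc) (htr.comp hEc)
  have hentryc : ∀ i j, Continuous fun τ => M τ i j := by
    intro i j
    have h2 : Continuous (fun N : Matrix (Fin n) (Fin n) ℝ => N i j) :=
      LinearMap.continuous_of_finiteDimensional
        ((LinearMap.proj j).comp (LinearMap.proj (R := ℝ) (φ := fun _ : Fin n => Fin n → ℝ) i))
    exact h2.comp hMc
  have hvecc : Continuous fun τ => (M τ).mulVec c := by
    refine continuous_pi fun i => ?_
    have : (fun τ => (M τ).mulVec c i) = fun τ => ∑ j, M τ i j * c j := by
      funext τ; rfl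
    rw [this]
    exact continuous_finset_sum _ fun j _ => (hentryc i j).mul continuous_const
  -- the control
  refine ⟨fun τ => if τ ∈ Set.Icc t₀ t₁ then Bᵀ.mulVec ((E τ)ᵀ.mulVec c) else 0, ?_, ?_, ?_⟩
  · intro τ j
    by_cases hτ : τ ∈ Set.Icc t₀ t₁
    · simp only [hτ, if_pos]
      have hEnn : ∀ p q, 0 ≤ E τ p q := by
        intro p q
        exact hA (t₁ - τ) (by linarith [hτ.2]) p q
      show 0 ≤ ∑ q, Bᵀ j q * ((E τ)ᵀ.mulVec c) q
      refine Finset.sum_nonneg fun q _ => mul_nonneg (hB q j) ?_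
      show 0 ≤ ∑ k, (E τ)ᵀ q k * c k
      exact Finset.sum_nonneg fun k _ => mul_nonneg (hEnn k q) (hcnn k)
    · simp [hτ]
  -- before the other two goals, establish the key pointwise equality
  all_goals
    have heq : Set.EqOn
        (fun τ => (E τ).mulVec (B.mulVec
          (if τ ∈ Set.Icc t₀ t₁ then Bᵀ.mulVec ((E τ)ᵀ.mulVec c) else 0)))
        (fun τ => (M τ).mulVec c) (Set.uIcc t₀ t₁) := by
      intro τ hτ
      rw [Set.uIcc_of_le ht.le] at hτ
      simp only [hτ, if_pos, Matrix.mulVec_mulVec, hM, Matrix.mul_assoc]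
    have hInt : IntervalIntegrable (fun τ => (M τ).mulVec c) volume t₀ t₁ :=
      hvecc.intervalIntegrable t₀ t₁
  · exact ((hvecc.continuousOn).congr heq).intervalIntegrable
  · rw [intervalIntegral.integral_congr heq]
    funext i
    have hproj := (ContinuousLinearMap.proj (R := ℝ) (φ := fun _ : Fin n => ℝ)
      i).intervalIntegral_comp_comm hInt
    have h1 : (∫ τ in t₀..t₁, (M τ).mulVec c) i
        = ∫ τ in t₀..t₁, ((M τ).mulVec c) i := hproj.symm
    rw [h1]
    have h2 : (fun τ => ((M τ).mulVec c) i) = fun τ => ∑ j, M τ i j * c j := by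
      funext τ; rfl
    rw [h2]
    rw [intervalIntegral.integral_finset_sum (f := fun j τ => M τ i j * c j) (fun j _ =>
      ((hentryc i j).mul continuous_const).intervalIntegrable t₀ t₁)]
    have h3 : ∀ j, (∫ τ in t₀..t₁, M τ i j * c j) = W i j * c j := by
      intro j
      rw [intervalIntegral.integral_mul_const, hW i j]
    simp only [h3]
    exact hWc i
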